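/- arXiv:2310.20069 — 5 statements merged into one kernel-verified Lean document; each statement's English description precedes it below -/
import Mathlib

section
/- Let T be a type and P a nonempty collection of subsets of T that is closed under complementation and under binary intersection (a field of sets on T). Then in the topology generated by P, for every collection Z of subsets of T, the set ⊔Z = ⋂{Y ∈ P : ⋃Z ⊆ Y} is the closure of ⋃Z. -/
/-- For a field of sets `P` on `T`, in the topology generated by `P`,
`⊔Z = ⋂{Y ∈ P : ⋃Z ⊆ Y}` is the closure of `⋃Z`. -/
theorem sqcup_eq_closure {T : Type*} (P : Set (Set T)) (hne : P.Nonempty)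
    (hcompl : ∀ Y ∈ P, Yᶜ ∈ P) (hinter : ∀ Y ∈ P, ∀ W ∈ P, Y ∩ W ∈ P) :
    ∀ Z : Set (Set T),
      ⋂₀ {Y | Y ∈ P ∧ ⋃₀ Z ⊆ Y} =
        @closure T (TopologicalSpace.generateFrom P) (⋃₀ Z) := by
  letI t : TopologicalSpace T := TopologicalSpace.generateFrom P
  obtain ⟨A, hA⟩ := hne
  have huniv : (Set.univ : Set T) ∈ P := by
    have h1 : A ∩ Aᶜ ∈ P := hinter _ hA _ (hcompl _ hA)
    have h2 : (A ∩ Aᶜ)ᶜ ∈ P := hcompl _ h1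
    simpa using h2
  have hb : TopologicalSpace.IsTopologicalBasis P :=
    ⟨fun t₁ h₁ t₂ h₂ x hx => ⟨t₁ ∩ t₂, hinter _ h₁ _ h₂, hx, subset_rfl⟩,
     Set.eq_univ_of_univ_subset (Set.subset_sUnion_of_mem huniv), rfl⟩
  intro Z
  apply subset_antisymm
  · intro x hx
    rw [hb.mem_closure_iff]
    intro o ho hxo
    by_contra h
    rw [Set.not_nonempty_iff_eq_empty] at h
    have hsub : ⋃₀ Z ⊆ oᶜ := by
      intro y hy hyo
      exact absurd h (by rw [Set.eq_empty_iff_forall_notMem]; push_neg; exact ⟨y, hyo, hy⟩)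
    exact hx oᶜ ⟨hcompl _ ho, hsub⟩ hxo
  · apply Set.subset_sInter
    rintro Y ⟨hY, hsub⟩
    exact closure_minimal hsub ⟨TopologicalSpace.GenerateOpen.basic _ (hcompl _ hY)⟩
end

section
/- (Validity of the Dedekind completeness axiom □(Gφ→PGφ)→(Gφ→Hφ) over real time.) For every subset X of ℝ, define G X = {t ∈ ℝ : ∀ s, t < s → s ∈ X} and H X = {t ∈ ℝ : ∀ s, s < t → s ∈ X}. If every t ∈ G X has some u < t with u ∈ G X, then G X ⊆ H X. -/
/-- Validity of the Dedekind completeness axiom over real time: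
if every `t ∈ G X` has some `u < t` with `u ∈ G X`, then `G X ⊆ H X`,
where `G X = {t | ∀ s, t < s → s ∈ X}` and `H X = {t | ∀ s, s < t → s ∈ X}`. -/
theorem dedekind_axiom_real (X : Set ℝ)
    (h : ∀ t ∈ {t : ℝ | ∀ s, t < s → s ∈ X},
      ∃ u, u < t ∧ u ∈ {t : ℝ | ∀ s, t < s → s ∈ X}) :
    {t : ℝ | ∀ s, t < s → s ∈ X} ⊆ {t : ℝ | ∀ s, s < t → s ∈ X} := by
  intro t ht s hst
  by_contra hs
  -- Every element of G X ∩ (-∞, t] is ≥ s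
  set A : Set ℝ := {u | (∀ v, u < v → v ∈ X) ∧ u ≤ t} with hA
  have hAne : A.Nonempty := ⟨t, ht, le_refl t⟩
  have hlb : ∀ u ∈ A, s ≤ u := by
    intro u hu
    by_contra hsu
    exact hs (hu.1 s (lt_of_not_ge hsu))
  have hbdd : BddBelow A := ⟨s, hlb⟩
  set m := sInf A with hm
  have hmt : m ≤ t := csInf_le hbdd ⟨ht, le_refl t⟩
  have hmG : ∀ v, m < v → v ∈ X := by
    intro v hv
    rcases exists_lt_of_csInf_lt hAne hv with ⟨u, huA, huv⟩
    exact huA.1 v huv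
  rcases h m hmG with ⟨u, hum, huG⟩
  have huA : u ∈ A := ⟨huG, le_of_lt (lt_of_lt_of_le hum hmt)⟩
  exact absurd (csInf_le hbdd huA) (not_le_of_gt hum)
end

section
/- (Validity of the mirror-image Dedekind completeness axiom over real time.) For every subset X of ℝ, define G X = {t ∈ ℝ : ∀ s, t < s → s ∈ X} and H X = {t ∈ ℝ : ∀ s, s < t → s ∈ X}. If every t ∈ H X has some u > t with u ∈ H X, then H X ⊆ G X. -/
/-- Validity of the mirror-image Dedekind completeness axiom over real
time: if every `t ∈ H X` has some `u > t` with `u ∈ H X`, then `H X ⊆ G X`. -/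
theorem dedekind_axiom_mirror_real (X : Set ℝ)
    (h : ∀ t ∈ {t : ℝ | ∀ s, s < t → s ∈ X},
      ∃ u, t < u ∧ u ∈ {t : ℝ | ∀ s, s < t → s ∈ X}) :
    {t : ℝ | ∀ s, s < t → s ∈ X} ⊆ {t : ℝ | ∀ s, t < s → s ∈ X} := by
  intro t ht s hts
  set A : Set ℝ := {t : ℝ | ∀ s, s < t → s ∈ X} with hA
  by_contra hs
  -- A is bounded above by s
  have hbdd : ∀ u ∈ A, u ≤ s := by
    intro u hu
    by_contra hus
    exact hs (hu s (lt_of_not_ge hus))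
  have hne : A.Nonempty := ⟨t, ht⟩
  have hbddA : BddAbove A := ⟨s, hbdd⟩
  set a := sSup A with ha
  have haA : a ∈ A := by
    intro r hr
    obtain ⟨u, huA, hru⟩ := exists_lt_of_lt_csSup hne hr
    exact huA r hru
  obtain ⟨u, hau, huA⟩ := h a haA
  exact absurd (le_csSup hbddA huA) (not_le.mpr hau)
end

section
/- (Failure of the Dedekind completeness axiom over rational time.) There exists a subset X of ℚ such that, defining G X = {t ∈ ℚ : ∀ s, t < s → s ∈ X} and H X = {t ∈ ℚ : ∀ s, s < t → s ∈ X}, every t ∈ G X has some u < t with u ∈ G X, yet G X is not contained in H X. -/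
/-- Failure of the Dedekind completeness axiom over rational time:
there is `X ⊆ ℚ` such that every `t ∈ G X` has some `u < t` with `u ∈ G X`,
yet `G X ⊄ H X`. -/
theorem dedekind_axiom_fails_rat :
    ∃ X : Set ℚ,
      (∀ t ∈ {t : ℚ | ∀ s, t < s → s ∈ X},
        ∃ u, u < t ∧ u ∈ {t : ℚ | ∀ s, t < s → s ∈ X}) ∧
      ¬ ({t : ℚ | ∀ s, t < s → s ∈ X} ⊆ {t : ℚ | ∀ s, s < t → s ∈ X}) := by
  refine ⟨{q : ℚ | Real.sqrt 2 < (q : ℝ)}, ?_, ?_⟩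
  · intro t ht
    -- first show √2 < t
    have hlt : Real.sqrt 2 < (t : ℝ) := by
      by_contra h
      push_neg at h
      have hne : Real.sqrt 2 ≠ (t : ℝ) := (irrational_sqrt_two.ne_rat t)
      have h' : (t : ℝ) < Real.sqrt 2 := lt_of_le_of_ne h (fun he => hne he.symm)
      obtain ⟨s, hs1, hs2⟩ := exists_rat_btwn h'
      exact absurd (ht s (by exact_mod_cast hs1)) (not_lt.mpr hs2.le)
    obtain ⟨u, hu1, hu2⟩ := exists_rat_btwn hlt
    refine ⟨u, by exact_mod_cast hu2, ?_⟩
    intro s hs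
    exact hu1.trans (by exact_mod_cast hs)
  · intro h
    have h2 : (2 : ℚ) ∈ {t : ℚ | ∀ s, t < s → s ∈ {q : ℚ | Real.sqrt 2 < (q : ℝ)}} := by
      intro s hs
      have : Real.sqrt 2 < 2 := by
        nlinarith [Real.sq_sqrt (by norm_num : (2:ℝ) ≥ 0), Real.sqrt_nonneg 2]
      simp only [Set.mem_setOf_eq]
      push_cast
      exact this.trans (by exact_mod_cast hs)
    have := h h2 0 (by norm_num)
    simp only [Set.mem_setOf_eq] at this
    norm_num at this
    nlinarith [Real.sq_sqrt (by norm_num : (2:ℝ) ≥ 0), Real.sqrt_nonneg 2, this]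
end

section
/- For all real numbers r < s, there exist functions a, b : ℚ → ℝ such that for every rational q one has r < a q, a q < b q, and b q < s, and for all rationals q < q' one has b q < a q'. (Thus the open intervals (a q, b q) form a ℚ-indexed family of pairwise disjoint nonempty open subintervals of (r, s), whose ordering by 'lying strictly to the left of' is order-isomorphic to (ℚ, <).) -/
/-- In any open interval `(r, s)` of `ℝ` there is a `ℚ`-indexed family
of pairwise disjoint nonempty open subintervals `(a q, b q)` ordered as `(ℚ, <)`. -/
theorem rationally_indexed_intervals (r s : ℝ) (hrs : r < s) :
    ∃ a b : ℚ → ℝ,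
      (∀ q : ℚ, r < a q ∧ a q < b q ∧ b q < s) ∧
      (∀ q q' : ℚ, q < q' → b q < a q') := by
  have : Nontrivial (Set.Ioo r s) := by
    obtain ⟨x, hx⟩ := exists_between hrs
    obtain ⟨y, hy⟩ := exists_between hx.1
    exact ⟨⟨x, hx⟩, ⟨y, hy.1, hy.2.trans hx.2⟩,
      fun h => absurd (congrArg Subtype.val h) (ne_of_gt hy.2)⟩
  have : Countable (ℚ ×ₗ Bool) := by
    unfold Lex; infer_instance
  obtain ⟨e⟩ := Order.embedding_from_countable_to_dense (ℚ ×ₗ Bool) (Set.Ioo r s)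
  refine ⟨fun q => (e (toLex (q, false))).val, fun q => (e (toLex (q, true))).val, ?_, ?_⟩
  · intro q
    refine ⟨(e (toLex (q, false))).2.1, ?_, (e (toLex (q, true))).2.2⟩
    exact e.strictMono (by simp [Prod.Lex.lt_iff])
  · intro q q' h
    exact e.strictMono (by simp [Prod.Lex.lt_iff, h])
end
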